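/- Let k, n ∈ ℕ with 1 ≤ k ≤ n, let s_1,…,s_n ∈ [0,1] with ∑_i s_i ≤ k, let c ≥ 0, and define p_i = min(s_i + c, 1), assuming ∑_{i=1}^n p_i = k. Then for every vector q ∈ [0,1]^n satisfying ∑_{i=1}^n q_i ≤ k and |q_i − q_j| ≤ |s_i − s_j| for all i, j, one has ∑_{i=1}^n q_i s_i ≤ ∑_{i=1}^n p_i s_i. That is, the upward water-filling solution maximizes the linear utility among all fairness-preserving marginal selection probability vectors. -/
import Mathlib

open Finset

/-- Discrete layer-cake lemma: if every strict upper level set of a nonnegative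
vector `s` has nonpositive `d`-sum, then `∑ d i * s i ≤ 0`. -/
lemma layer_cake_aux {n : ℕ} (d : Fin n → ℝ) :
    ∀ N : ℕ, ∀ s : Fin n → ℝ,
      ((Finset.univ : Finset (Fin n)).filter (fun i => 0 < s i)).card ≤ N →
      (∀ i, 0 ≤ s i) →
      (∀ θ : ℝ, 0 ≤ θ →
        ∑ i ∈ (Finset.univ : Finset (Fin n)).filter (fun i => θ < s i), d i ≤ 0) →
      ∑ i, d i * s i ≤ 0 := by
  intro N
  induction N with
  | zero =>
    intro s hcard hs hU
    have hT : ((Finset.univ : Finset (Fin n)).filter (fun i => 0 < s i)) = ∅ :=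
      Finset.card_eq_zero.mp (Nat.le_zero.mp hcard)
    have hz : ∀ i, s i = 0 := by
      intro i
      by_contra h
      have h0 : 0 < s i := lt_of_le_of_ne (hs i) (Ne.symm h)
      have : i ∈ ((Finset.univ : Finset (Fin n)).filter (fun i => 0 < s i)) := by
        simp [h0]
      simp [hT] at this
    have : ∀ i, d i * s i = 0 := fun i => by rw [hz i, mul_zero]
    simp [this]
  | succ N ih =>
    intro s hcard hs hU
    set T := ((Finset.univ : Finset (Fin n)).filter (fun i => 0 < s i)) with hTdef
    rcases T.eq_empty_or_nonempty with hT | hT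
    · have hz : ∀ i, s i = 0 := by
        intro i
        by_contra h
        have h0 : 0 < s i := lt_of_le_of_ne (hs i) (Ne.symm h)
        have : i ∈ T := by simp [hTdef, h0]
        simp [hT] at this
      have : ∀ i, d i * s i = 0 := fun i => by rw [hz i, mul_zero]
      simp [this]
    · obtain ⟨i₀, hi₀T, hmin⟩ := T.exists_min_image s hT
      have hi₀pos : 0 < s i₀ := by
        have := hi₀T
        simp [hTdef] at this
        exact this
      set s' : Fin n → ℝ := fun i => max (s i - s i₀) 0 with hs'def
      have hs'nonneg : ∀ i, 0 ≤ s' i := fun i => le_max_right _ _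
      -- upper level sets of s'
      have hfilter : ∀ θ : ℝ, 0 ≤ θ →
          ((Finset.univ : Finset (Fin n)).filter (fun i => θ < s' i)) =
          ((Finset.univ : Finset (Fin n)).filter (fun i => θ + s i₀ < s i)) := by
        intro θ hθ
        apply Finset.filter_congr
        intro i _
        simp only [hs'def, lt_max_iff]
        constructor
        · rintro (h | h)
          · linarith
          · exact absurd h (not_lt.mpr hθ)
        · intro h
          left; linarith
      have hU' : ∀ θ : ℝ, 0 ≤ θ →
          ∑ i ∈ (Finset.univ : Finset (Fin n)).filter (fun i => θ < s' i), d i ≤ 0 := by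
        intro θ hθ
        rw [hfilter θ hθ]
        exact hU (θ + s i₀) (by linarith)
      -- cardinality decreases
      have hsub : ((Finset.univ : Finset (Fin n)).filter (fun i => 0 < s' i)) ⊂ T := by
        constructor
        · intro i hi
          simp only [hs'def, Finset.mem_filter, lt_max_iff] at hi
          rcases hi.2 with h | h
          · simp only [hTdef, Finset.mem_filter, Finset.mem_univ, true_and]
            linarith
          · exact absurd h (lt_irrefl 0)
        · intro hsup
          have := hsup hi₀T
          simp only [hs'def, Finset.mem_filter, lt_max_iff] at this
          rcases this.2 with h | h
          · linarith
          · exact absurd h (lt_irrefl 0)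
      have hcard' : ((Finset.univ : Finset (Fin n)).filter (fun i => 0 < s' i)).card ≤ N := by
        have := Finset.card_lt_card hsub
        omega
      have hIH : ∑ i, d i * s' i ≤ 0 := ih s' hcard' hs'nonneg hU'
      -- decomposition
      have hdecomp : ∑ i, d i * s i = (∑ i, d i * s' i) + ∑ i ∈ T, d i * s i₀ := by
        rw [Finset.sum_filter, ← Finset.sum_add_distrib]
        apply Finset.sum_congr rfl
        intro i _
        by_cases h0 : 0 < s i
        · have hge : s i₀ ≤ s i := hmin i (by simp [hTdef, h0])
          have : s' i = s i - s i₀ := by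
            simp only [hs'def]
            exact max_eq_left (by linarith)
          rw [this]
          simp [hTdef, h0]
          ring
        · have hz : s i = 0 := le_antisymm (not_lt.mp h0) (hs i)
          have : s' i = 0 := by
            simp only [hs'def, hz]
            exact max_eq_right (by linarith)
          rw [this, hz]
          simp [hTdef, h0]
      have hT0 : ∑ i ∈ T, d i ≤ 0 := hU 0 le_rfl
      have : ∑ i ∈ T, d i * s i₀ = (∑ i ∈ T, d i) * s i₀ := by
        rw [Finset.sum_mul]
      rw [hdecomp, this]
      have : (∑ i ∈ T, d i) * s i₀ ≤ 0 :=
        mul_nonpos_of_nonpos_of_nonneg hT0 (le_of_lt hi₀pos)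
      linarith

/-- Optimality of upward water-filling for linear utility: if `∑ s ≤ k` and
`p i = min (s i + c) 1` sums to `k`, then `p` maximizes `∑ q i * s i` over all
fairness-preserving marginal vectors `q ∈ [0,1]^n` with `∑ q ≤ k`. -/
theorem waterfill_up_optimal_linear (k n : ℕ) (hk : 1 ≤ k) (hkn : k ≤ n)
    (s : Fin n → ℝ) (hs : ∀ i, 0 ≤ s i ∧ s i ≤ 1) (hsum : ∑ i, s i ≤ k)
    (c : ℝ) (hc : 0 ≤ c) (p : Fin n → ℝ) (hp : ∀ i, p i = min (s i + c) 1)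
    (hpk : ∑ i, p i = k) :
    ∀ q : Fin n → ℝ, (∀ i, 0 ≤ q i ∧ q i ≤ 1) → (∑ i, q i ≤ k) →
      (∀ i j, |q i - q j| ≤ |s i - s j|) →
      ∑ i, q i * s i ≤ ∑ i, p i * s i := by
  intro q hq hqk hfair
  set d : Fin n → ℝ := fun i => q i - p i with hd
  have hdsum : ∑ i, d i ≤ 0 := by
    have : ∑ i, d i = (∑ i, q i) - ∑ i, p i := by
      simp [hd, Finset.sum_sub_distrib]
    rw [this, hpk]
    linarith
  -- key: every strict upper level set has nonpositive d-sum
  have hU : ∀ θ : ℝ, 0 ≤ θ →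
      ∑ i ∈ (Finset.univ : Finset (Fin n)).filter (fun i => θ < s i), d i ≤ 0 := by
    intro θ hθ
    set U := (Finset.univ : Finset (Fin n)).filter (fun i => θ < s i) with hUdef
    have hcompl : ∑ i ∈ U, d i = (∑ i, d i) - ∑ i ∈ Uᶜ, d i := by
      rw [eq_sub_iff_add_eq, Finset.sum_add_sum_compl]
    by_cases hcase : 0 ≤ ∑ i ∈ Uᶜ, d i
    · rw [hcompl]; linarith
    · -- there is j outside U with d j < 0
      push_neg at hcase
      have : ∃ j ∈ Uᶜ, d j < 0 := by
        by_contra h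
        push_neg at h
        have : (0:ℝ) ≤ ∑ i ∈ Uᶜ, d i :=
          Finset.sum_nonneg (fun j hj => le_of_not_gt (by
            intro hlt
            exact absurd hlt (not_lt.mpr (h j hj))))
        linarith
      obtain ⟨j, hjU, hdj⟩ := this
      have hsj : s j ≤ θ := by
        simp [hUdef, Finset.mem_compl, Finset.mem_filter] at hjU
        exact hjU
      -- pointwise: every i ∈ U has d i ≤ 0
      apply Finset.sum_nonpos
      intro i hi
      have hsi : θ < s i := by
        simp [hUdef, Finset.mem_filter] at hi
        exact hi
      have hsij : s j ≤ s i := le_of_lt (lt_of_le_of_lt hsj hsi)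
      by_cases hone : s i + c < 1
      · -- p i = s i + c, compare with j
        have hpi : p i = s i + c := by rw [hp i]; exact min_eq_left (le_of_lt hone)
        have hpj : p j ≤ s j + c := by rw [hp j]; exact min_le_left _ _
        have hqij : q i - q j ≤ s i - s j := by
          have h1 := hfair i j
          have habs : |s i - s j| = s i - s j := abs_of_nonneg (by linarith)
          calc q i - q j ≤ |q i - q j| := le_abs_self _
            _ ≤ |s i - s j| := h1
            _ = s i - s j := habs
        have : d i ≤ d j := by
          simp only [hd]
          rw [hpi]
          have : q j - p j ≥ q j - (s j + c) := by linarith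
          linarith
        linarith
      · -- p i = 1 ≥ q i
        have hpi : p i = 1 := by
          rw [hp i]
          exact min_eq_right (not_lt.mp hone)
        have := (hq i).2
        simp only [hd, hpi]
        linarith
  have hnonneg : ∀ i, 0 ≤ s i := fun i => (hs i).1
  have hmain : ∑ i, d i * s i ≤ 0 :=
    layer_cake_aux d ((Finset.univ : Finset (Fin n)).filter (fun i => 0 < s i)).card
      s le_rfl hnonneg hU
  have : ∑ i, d i * s i = (∑ i, q i * s i) - ∑ i, p i * s i := by
    simp only [hd, sub_mul]
    rw [Finset.sum_sub_distrib]
  linarith
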